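/- Let f : ℝ^d → ℝ^d be globally Lipschitz and continuously differentiable with Jacobian A(θ) = Df(θ), and suppose the function θ ↦ ‖f(θ)‖ is coercive, i.e., the sublevel set {θ : ‖f(θ)‖ ≤ r} is compact for every r ≥ 0. Let ε > 0 and let w : [0,∞) → ℝ^d be a differentiable solution of the regularized Newton–Raphson flow. Then the trajectory {w(t) : t ≥ 0} is bounded, and lim_{t→∞} A(w(t))ᵀ f(w(t)) = 0. -/

import Mathlib

open Matrix Filter Topology
open scoped RealInnerProductSpace
set_option maxHeartbeats 1000000
set_option synthInstance.maxHeartbeats 400000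

variable {d : ℕ}

local notation "T" => Matrix.toEuclideanCLM (𝕜 := ℝ) (n := Fin d)

lemma pair (B : Matrix (Fin d) (Fin d) ℝ) (x y : EuclideanSpace ℝ (Fin d)) :
    ⟪T Bᵀ x, y⟫ = ⟪x, T B y⟫ := by
  have h : T Bᵀ = ContinuousLinearMap.adjoint (T B) := by
    rw [← ContinuousLinearMap.star_eq_adjoint, ← map_star]
    simp [Matrix.star_eq_conjTranspose, Matrix.conjTranspose_eq_transpose_of_trivial]
  rw [h, ContinuousLinearMap.adjoint_inner_left]

lemma quad (ε : ℝ) (B : Matrix (Fin d) (Fin d) ℝ) (x : EuclideanSpace ℝ (Fin d)) :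
    ⟪T (ε • (1 : Matrix (Fin d) (Fin d) ℝ) + Bᵀ * B) x, x⟫ = ε * ‖x‖ ^ 2 + ‖T B x‖ ^ 2 := by
  rw [map_add, _root_.map_smul, _root_.map_one, _root_.map_mul, ContinuousLinearMap.add_apply,
    ContinuousLinearMap.smul_apply, ContinuousLinearMap.one_apply,
    ContinuousLinearMap.mul_apply, inner_add_left, real_inner_smul_left, pair,
    real_inner_self_eq_norm_sq, real_inner_self_eq_norm_sq]

lemma Mpos {ε : ℝ} (hε : 0 < ε) (B : Matrix (Fin d) (Fin d) ℝ) :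
    (ε • (1 : Matrix (Fin d) (Fin d) ℝ) + Bᵀ * B).PosDef := by
  rw [Matrix.posDef_iff_dotProduct_mulVec]
  constructor
  · simp [Matrix.IsHermitian, Matrix.conjTranspose_add, Matrix.conjTranspose_smul,
      Matrix.conjTranspose_mul, Matrix.conjTranspose_eq_transpose_of_trivial]
  · intro x hx
    have hstar : star x = x := by simp
    rw [hstar, Matrix.add_mulVec, dotProduct_add, Matrix.smul_mulVec,
      Matrix.one_mulVec, dotProduct_smul, ← Matrix.mulVec_mulVec,
      Matrix.dotProduct_mulVec, Matrix.vecMul_transpose]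
    have h1 : 0 < dotProduct x x :=
      lt_of_le_of_ne (Finset.sum_nonneg fun i _ => mul_self_nonneg _)
        (Ne.symm (mt dotProduct_self_eq_zero.mp hx))
    have h2 : 0 ≤ dotProduct (B *ᵥ x) (B *ᵥ x) :=
      Finset.sum_nonneg fun i _ => mul_self_nonneg _
    have := smul_pos hε h1
    simp only [smul_eq_mul] at this ⊢
    linarith

lemma key {ε K : ℝ} (hε : 0 < ε) (hK : 0 ≤ K) (B : Matrix (Fin d) (Fin d) ℝ)
    (hB : ‖T B‖ ≤ K) (v : EuclideanSpace ℝ (Fin d)) :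
    ε / (ε + K ^ 2) ^ 2 * ‖v‖ ^ 2 ≤
        ⟪v, T (ε • (1 : Matrix (Fin d) (Fin d) ℝ) + Bᵀ * B)⁻¹ v⟫ ∧
      ‖T (ε • (1 : Matrix (Fin d) (Fin d) ℝ) + Bᵀ * B)⁻¹ v‖ ≤ ‖v‖ / ε := by
  set M := ε • (1 : Matrix (Fin d) (Fin d) ℝ) + Bᵀ * B with hM
  set u := T M⁻¹ v with hu
  have hdet : IsUnit M.det := (Mpos hε B).det_pos.ne'.isUnit
  have hMu : T M u = v := by
    rw [hu, ← ContinuousLinearMap.mul_apply, ← _root_.map_mul, Matrix.mul_nonsing_inv _ hdet,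
      _root_.map_one, ContinuousLinearMap.one_apply]
  have hq : ⟪v, u⟫ = ε * ‖u‖ ^ 2 + ‖T B u‖ ^ 2 := by
    calc ⟪v, u⟫ = ⟪T M u, u⟫ := by rw [hMu]
    _ = ε * ‖u‖ ^ 2 + ‖T B u‖ ^ 2 := quad ε B u
  have h1 : ε * ‖u‖ ^ 2 ≤ ⟪v, u⟫ := by rw [hq]; exact le_add_of_nonneg_right (sq_nonneg _)
  have hstar : T Bᵀ = star (T B) := by
    rw [← map_star, Matrix.star_eq_conjTranspose, Matrix.conjTranspose_eq_transpose_of_trivial]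
  have hMnorm : ‖T M‖ ≤ ε + K ^ 2 := by
    rw [hM, map_add, _root_.map_smul, _root_.map_one, _root_.map_mul]
    refine le_trans (norm_add_le _ _) (add_le_add ?_ ?_)
    · calc ‖ε • (1 : EuclideanSpace ℝ (Fin d) →L[ℝ] EuclideanSpace ℝ (Fin d))‖
          ≤ ‖ε‖ * ‖(1 : EuclideanSpace ℝ (Fin d) →L[ℝ] EuclideanSpace ℝ (Fin d))‖ :=
        ContinuousLinearMap.opNorm_smul_le _ _
      _ ≤ ε * 1 :=
        mul_le_mul (le_of_eq (abs_of_pos hε)) ContinuousLinearMap.norm_id_le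
          (norm_nonneg _) hε.le
      _ = ε := mul_one ε
    · calc ‖T Bᵀ * T B‖ ≤ ‖T Bᵀ‖ * ‖T B‖ := norm_mul_le _ _
      _ ≤ K * K := by
        have hn : ‖T Bᵀ‖ = ‖T B‖ := by
          rw [hstar, ContinuousLinearMap.star_eq_adjoint]
          exact LinearIsometryEquiv.norm_map ContinuousLinearMap.adjoint _
        rw [hn]; exact mul_le_mul hB hB (norm_nonneg _) hK
      _ = K ^ 2 := (sq K).symm
  have hvle : ‖v‖ ≤ (ε + K ^ 2) * ‖u‖ := by
    rw [← hMu]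
    exact le_trans ((T M).le_opNorm u) (mul_le_mul_of_nonneg_right hMnorm (norm_nonneg _))
  have hεK : 0 < ε + K ^ 2 := by positivity
  constructor
  · have h3 : ‖v‖ ^ 2 ≤ (ε + K ^ 2) ^ 2 * ‖u‖ ^ 2 := by nlinarith [norm_nonneg v, norm_nonneg u]
    calc ε / (ε + K ^ 2) ^ 2 * ‖v‖ ^ 2 ≤ ε / (ε + K ^ 2) ^ 2 * ((ε + K ^ 2) ^ 2 * ‖u‖ ^ 2) := by
          exact mul_le_mul_of_nonneg_left h3 (by positivity)
    _ = ε * ‖u‖ ^ 2 := by field_simp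
    _ ≤ ⟪v, u⟫ := h1
  · rw [le_div_iff₀ hε]
    have h4 : ⟪v, u⟫ ≤ ‖v‖ * ‖u‖ := real_inner_le_norm v u
    rcases eq_or_lt_of_le (norm_nonneg u) with h0 | h0
    · rw [← h0]; simp [norm_nonneg]
    · nlinarith

/-- Let `f : ℝ^d → ℝ^d` be globally Lipschitz and continuously
differentiable with Jacobian `A θ = Df(θ)`, and suppose `θ ↦ ‖f θ‖` is coercive
(each sublevel set is compact).  Let `ε > 0` and let `w` be a differentiable solution
of the regularized Newton–Raphson flow.  Then the trajectory `{w t : t ≥ 0}` is bounded,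
and `A(w(t))ᵀ f(w(t)) → 0` as `t → ∞`. -/
theorem stmt_2 (d : ℕ)
    (f : EuclideanSpace ℝ (Fin d) → EuclideanSpace ℝ (Fin d))
    (K : NNReal) (hLip : LipschitzWith K f)
    (A : EuclideanSpace ℝ (Fin d) → Matrix (Fin d) (Fin d) ℝ)
    (hf : ∀ θ, HasFDerivAt f (Matrix.toEuclideanCLM (𝕜 := ℝ) (A θ)) θ)
    (hA : Continuous A)
    (hcoercive : ∀ r : ℝ, IsCompact {θ : EuclideanSpace ℝ (Fin d) | ‖f θ‖ ≤ r})
    (ε : ℝ) (hε : 0 < ε)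
    (w : ℝ → EuclideanSpace ℝ (Fin d))
    (hw : ∀ t : ℝ, 0 ≤ t → HasDerivAt w
      (-(Matrix.toEuclideanCLM (𝕜 := ℝ)
          ((ε • (1 : Matrix (Fin d) (Fin d) ℝ) + (A (w t))ᵀ * A (w t))⁻¹ * (A (w t))ᵀ)
        (f (w t)))) t) :
    (∃ C : ℝ, ∀ t : ℝ, 0 ≤ t → ‖w t‖ ≤ C) ∧
      Tendsto (fun t : ℝ => Matrix.toEuclideanCLM (𝕜 := ℝ) ((A (w t))ᵀ) (f (w t)))
        atTop (𝓝 0) := by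
  have hKnn : (0 : ℝ) ≤ (K : ℝ) := K.coe_nonneg
  set V : EuclideanSpace ℝ (Fin d) → EuclideanSpace ℝ (Fin d) :=
    fun θ => toEuclideanCLM (𝕜 := ℝ) (A θ)ᵀ (f θ) with hV
  set U : EuclideanSpace ℝ (Fin d) → EuclideanSpace ℝ (Fin d) :=
    fun θ => toEuclideanCLM (𝕜 := ℝ)
      (ε • (1 : Matrix (Fin d) (Fin d) ℝ) + (A θ)ᵀ * A θ)⁻¹ (V θ) with hU
  have hKb : ∀ θ, ‖toEuclideanCLM (𝕜 := ℝ) (A θ)‖ ≤ K := fun θ => (hf θ).le_of_lipschitz hLip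
  set c : ℝ := ε / (ε + (K : ℝ) ^ 2) ^ 2 with hc
  have hc0 : 0 < c := by positivity
  have hkey : ∀ θ, c * ‖V θ‖ ^ 2 ≤ ⟪V θ, U θ⟫ ∧ ‖U θ‖ ≤ ‖V θ‖ / ε :=
    fun θ => key hε hKnn (A θ) (hKb θ) (V θ)
  have hVnn : ∀ θ, (0 : ℝ) ≤ ⟪V θ, U θ⟫ :=
    fun θ => le_trans (by positivity) (hkey θ).1
  -- derivative of w is -(U (w t))
  have hw' : ∀ t : ℝ, 0 ≤ t → HasDerivAt w (-(U (w t))) t := by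
    intro t ht
    have h := hw t ht
    rwa [_root_.map_mul, ContinuousLinearMap.mul_apply] at h
  -- derivative of f ∘ w
  have hg : ∀ t : ℝ, 0 ≤ t → HasDerivAt (fun s => f (w s))
      (-(toEuclideanCLM (𝕜 := ℝ) (A (w t)) (U (w t)))) t := by
    intro t ht
    have h := (hf (w t)).comp_hasDerivAt t (hw' t ht)
    rw [map_neg] at h
    exact h
  set φ : ℝ → ℝ := fun t => ⟪f (w t), f (w t)⟫ with hφdef
  have hφ : ∀ t : ℝ, 0 ≤ t → HasDerivAt φ (-(2 * ⟪V (w t), U (w t)⟫)) t := by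
    intro t ht
    have h := HasDerivAt.inner ℝ (hg t ht) (hg t ht)
    have hp : ⟪f (w t), toEuclideanCLM (𝕜 := ℝ) (A (w t)) (U (w t))⟫ = ⟪V (w t), U (w t)⟫ :=
      (pair (A (w t)) (f (w t)) (U (w t))).symm
    have he : ⟪f (w t), -(toEuclideanCLM (𝕜 := ℝ) (A (w t)) (U (w t)))⟫ +
        ⟪-(toEuclideanCLM (𝕜 := ℝ) (A (w t)) (U (w t))), f (w t)⟫ =
        -(2 * ⟪V (w t), U (w t)⟫) := by
      rw [inner_neg_right, inner_neg_left, hp, real_inner_comm (f (w t)), hp]; ring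
    rwa [he] at h
  have hφnorm : ∀ t : ℝ, φ t = ‖f (w t)‖ ^ 2 := fun t => real_inner_self_eq_norm_sq _
  have hφ0 : ∀ t : ℝ, 0 ≤ φ t := fun t => real_inner_self_nonneg
  -- φ is antitone on [0, ∞)
  have hmono : AntitoneOn φ (Set.Ici 0) := by
    apply antitoneOn_of_deriv_nonpos (convex_Ici 0)
    · exact fun t ht => (hφ t ht).continuousAt.continuousWithinAt
    · intro t ht
      rw [interior_Ici] at ht
      exact (hφ t ht.le).differentiableAt.differentiableWithinAt
    · intro t ht
      rw [interior_Ici] at ht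
      rw [(hφ t ht.le).deriv]
      have := hVnn (w t)
      linarith
  -- the trajectory stays in the sublevel set S
  set r : ℝ := ‖f (w 0)‖ with hr
  have hwS : ∀ t : ℝ, 0 ≤ t → ‖f (w t)‖ ≤ r := by
    intro t ht
    have h := hmono Set.self_mem_Ici ht ht
    rw [hφnorm, hφnorm] at h
    exact (pow_le_pow_iff_left₀ (norm_nonneg _) (norm_nonneg _) two_ne_zero).1 h
  have hScomp := hcoercive r
  constructor
  · obtain ⟨C, hC⟩ := isBounded_iff_forall_norm_le.1 hScomp.isBounded
    exact ⟨C, fun t ht => hC _ (hwS t ht)⟩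
  -- the limit statement
  by_contra hT
  rw [Metric.tendsto_atTop] at hT
  push_neg at hT
  obtain ⟨δ, hδ0, hfreq⟩ := hT
  simp only [dist_zero_right] at hfreq
  -- continuity of V
  have hTcont : Continuous (fun B : Matrix (Fin d) (Fin d) ℝ => toEuclideanCLM (𝕜 := ℝ) B) := by
    have hlin : IsLinearMap ℝ (fun B : Matrix (Fin d) (Fin d) ℝ => toEuclideanCLM (𝕜 := ℝ) B) :=
      ⟨fun x y => map_add _ x y, fun m x => _root_.map_smul _ m x⟩
    exact LinearMap.continuous_of_finiteDimensional (IsLinearMap.mk' _ hlin)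
  have hVcont : Continuous V :=
    (hTcont.comp hA.matrix_transpose).clm_apply hLip.continuous
  -- bound on V over S, Lipschitz constant for w
  obtain ⟨R, hR⟩ := hScomp.exists_bound_of_continuousOn hVcont.continuousOn
  have hR0 : 0 ≤ R := le_trans (norm_nonneg _) (hR (w 0) (by simp [hr]))
  have hwlip : ∀ a ∈ Set.Ici (0:ℝ), ∀ b ∈ Set.Ici (0:ℝ), ‖w b - w a‖ ≤ R / ε * ‖b - a‖ := by
    intro a ha b hb
    refine Convex.norm_image_sub_le_of_norm_hasDerivWithin_le
      (f' := fun t => -(U (w t))) (fun x hx => (hw' x hx).hasDerivWithinAt) ?_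
      (convex_Ici 0) ha hb
    intro x hx
    rw [norm_neg]
    calc ‖U (w x)‖ ≤ ‖V (w x)‖ / ε := (hkey (w x)).2
    _ ≤ R / ε := by
        gcongr
        exact hR (w x) (hwS x hx)
  -- uniform continuity of V on S
  have hUC := hScomp.uniformContinuousOn_of_continuous hVcont.continuousOn
  rw [Metric.uniformContinuousOn_iff] at hUC
  obtain ⟨γ, hγ0, hγ⟩ := hUC (δ / 2) (by positivity)
  set η : ℝ := γ / 2 / (R / ε + 1) with hηdef
  have hRε : 0 ≤ R / ε := by positivity
  have hη0 : 0 < η := by positivity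
  -- key decrease estimate
  set β : ℝ := c * δ ^ 2 / 2 with hβ
  have hβ0 : 0 < β := by positivity
  have hVlow : ∀ t : ℝ, 0 ≤ t → δ ≤ ‖V (w t)‖ → ∀ s ∈ Set.Icc t (t + η),
      δ / 2 ≤ ‖V (w s)‖ := by
    intro t ht hδt s hs
    have hs0 : 0 ≤ s := le_trans ht hs.1
    have hdist : dist (w s) (w t) < γ := by
      rw [dist_eq_norm]
      calc ‖w s - w t‖ ≤ R / ε * ‖s - t‖ := hwlip t ht s hs0
      _ ≤ R / ε * η := by
          apply mul_le_mul_of_nonneg_left ?_ hRε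
          rw [Real.norm_eq_abs, abs_of_nonneg (by linarith [hs.1])]
          linarith [hs.2]
      _ ≤ (R / ε + 1) * η := by nlinarith
      _ = γ / 2 := by rw [hηdef]; field_simp
      _ < γ := by linarith
    have := hγ (w s) (hwS s hs0) (w t) (hwS t ht) hdist
    rw [dist_eq_norm] at this
    have h2 : ‖V (w t)‖ - ‖V (w s)‖ ≤ ‖V (w s) - V (w t)‖ := by
      rw [norm_sub_rev]
      exact norm_sub_norm_le _ _
    linarith
  have hdecr : ∀ t : ℝ, 0 ≤ t → δ ≤ ‖V (w t)‖ → φ (t + η) ≤ φ t - β * η := by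
    intro t ht hδt
    have hanti : AntitoneOn (fun s => φ s + β * s) (Set.Icc t (t + η)) := by
      apply antitoneOn_of_deriv_nonpos (convex_Icc t (t + η))
      · intro s hs
        have hs0 : 0 ≤ s := le_trans ht hs.1
        exact (((hφ s hs0).add ((hasDerivAt_id s).const_mul β)).continuousAt).continuousWithinAt
      · intro s hs
        rw [interior_Icc] at hs
        have hs0 : 0 ≤ s := le_trans ht hs.1.le
        exact ((hφ s hs0).add ((hasDerivAt_id s).const_mul β)).differentiableAt.differentiableWithinAt
      · intro s hs
        rw [interior_Icc] at hs
        have hs0 : 0 ≤ s := le_trans ht hs.1.le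
        have hd : HasDerivAt (fun s => φ s + β * s) (-(2 * ⟪V (w s), U (w s)⟫) + β * 1) s :=
          (hφ s hs0).add ((hasDerivAt_id s).const_mul β)
        rw [hd.deriv]
        have hlow := hVlow t ht hδt s ⟨hs.1.le, hs.2.le⟩
        have hkl := (hkey (w s)).1
        have h3 : c * (δ / 2) ^ 2 ≤ c * ‖V (w s)‖ ^ 2 := by
          apply mul_le_mul_of_nonneg_left ?_ hc0.le
          apply pow_le_pow_left₀ (by positivity) hlow
        rw [hβ] at *
        nlinarith
    have h := hanti (Set.left_mem_Icc.2 (by linarith)) ⟨by linarith, le_refl _⟩ (by linarith)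
    simp only at h
    linarith
  -- infimum of φ
  set m : ℝ := sInf (φ '' Set.Ici 0) with hm
  have hbdd : BddBelow (φ '' Set.Ici 0) := ⟨0, fun x ⟨t, _, hxt⟩ => hxt ▸ hφ0 t⟩
  have hne : (φ '' Set.Ici 0).Nonempty := ⟨φ 0, 0, Set.self_mem_Ici, rfl⟩
  have hlow : ∀ t : ℝ, 0 ≤ t → m ≤ φ t := fun t ht => csInf_le hbdd ⟨t, ht, rfl⟩
  obtain ⟨x, ⟨T₀, hT0, hTx⟩, hxlt⟩ :=
    exists_lt_of_csInf_lt hne (lt_add_of_pos_right m (by positivity : (0:ℝ) < β * η / 2))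
  obtain ⟨t, htT, hδt⟩ := hfreq (max T₀ 0)
  have ht0 : 0 ≤ t := le_trans (le_max_right T₀ 0) htT
  have hφtT : φ t ≤ φ T₀ := hmono (Set.mem_Ici.2 hT0) (Set.mem_Ici.2 ht0)
    (le_trans (le_max_left T₀ 0) htT)
  have h1 := hdecr t ht0 hδt
  have h2 := hlow (t + η) (by linarith)
  rw [← hTx] at hxlt
  have hβη : 0 < β * η := mul_pos hβ0 hη0
  linarith
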